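/- Suppose 1, θ₁, θ₂ are linearly independent over ℚ. If there exists (η₁, η₂) ∈ ℝ² such that inf_ν ‖η₁ m_{ν,1} + η₂ m_{ν,2}‖ > 0, where (m_{ν,1}, m_{ν,2}) ranges over all best approximation vectors for (θ₁, θ₂) with weights (2/3, 1/3), then (η₁, η₂) ∈ BAD^Θ(2/3, 1/3). -/

import Mathlib

open scoped BigOperators

/-- Distance from a real number to the nearest integer. -/
noncomputable def dni (x : ℝ) : ℝ := |x - round x|

/-- `1, θ₁, θ₂` are linearly independent over `ℚ` (equivalently over `ℤ`). -/
def LinIndep (θ₁ θ₂ : ℝ) : Prop :=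
  ∀ a b c : ℤ, (a : ℝ) + (b : ℝ) * θ₁ + (c : ℝ) * θ₂ = 0 → a = 0 ∧ b = 0 ∧ c = 0

/-- The weighted size `max(|m₁|, |m₂|²)` of an integer vector. -/
noncomputable def wsize (m : ℤ × ℤ) : ℝ := max |(m.1 : ℝ)| ((m.2 : ℝ) ^ 2)

/-- The value of the linear form `‖θ₁ m₁ + θ₂ m₂‖`. -/
noncomputable def zeta (θ₁ θ₂ : ℝ) (m : ℤ × ℤ) : ℝ := dni (θ₁ * m.1 + θ₂ * m.2)

/-- `M = √(max(|m₁|, |m₂|²))`. -/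
noncomputable def Mval (m : ℤ × ℤ) : ℝ := Real.sqrt (wsize m)

/-- `m = (m₁, m₂)` is a best approximation vector for `(θ₁, θ₂)` w.r.t. the
weighted norm `max(|x₁|, |x₂|²)`. -/
def IsBestApprox (θ₁ θ₂ : ℝ) (m : ℤ × ℤ) : Prop :=
  m ≠ 0 ∧ ∃ m₀ : ℤ,
    |(m₀ : ℝ) + θ₁ * m.1 + θ₂ * m.2| = zeta θ₁ θ₂ m ∧
    ∀ x₀ x₁ x₂ : ℤ,
      max |(x₁ : ℝ)| ((x₂ : ℝ) ^ 2) ≤ wsize m →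
      |(x₀ : ℝ) + θ₁ * x₁ + θ₂ * x₂| ≤ zeta θ₁ θ₂ m →
      ((x₀, x₁, x₂) = ((0 : ℤ), (0 : ℤ), (0 : ℤ)) ∨
        (x₀, x₁, x₂) = (m₀, m.1, m.2) ∨ (x₀, x₁, x₂) = (-m₀, -m.1, -m.2))

/-- An enumeration `m : ℕ → ℤ × ℤ` of all the best approximation vectors of
`(θ₁, θ₂)`, ordered so that `M_ν` is strictly increasing (each best
approximation appears up to sign). -/
def IsBestApproxSeq (θ₁ θ₂ : ℝ) (m : ℕ → ℤ × ℤ) : Prop :=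
  (∀ ν, IsBestApprox θ₁ θ₂ (m ν)) ∧
  (StrictMono fun ν => Mval (m ν)) ∧
  (∀ p : ℤ × ℤ, IsBestApprox θ₁ θ₂ p → ∃ ν, p = m ν ∨ p = -(m ν))

/-- `(η₁, η₂)` belongs to `BAD^Θ(2/3, 1/3)`. -/
def BADT (θ₁ θ₂ η₁ η₂ : ℝ) : Prop :=
  ∃ c > 0, ∀ q : ℕ, 0 < q →
    c ≤ max ((q : ℝ) ^ ((2 : ℝ) / 3) * dni (q * θ₁ - η₁))
          ((q : ℝ) ^ ((1 : ℝ) / 3) * dni (q * θ₂ - η₂))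

lemma dni_nonneg (x : ℝ) : 0 ≤ dni x := abs_nonneg _

lemma dni_le_half (x : ℝ) : dni x ≤ 1/2 := abs_sub_round x

lemma int_abs_lt_one {n : ℤ} (h : |(n : ℝ)| < 1) : n = 0 := by
  have h2 : |n| < 1 := by exact_mod_cast h
  rw [abs_lt] at h2; omega

lemma dni_le_abs_sub (x : ℝ) (n : ℤ) : dni x ≤ |x - n| := by
  by_contra hcon
  push_neg at hcon
  have h1 : |x - (n:ℝ)| < 1/2 := lt_of_lt_of_le hcon (abs_sub_round x)
  have h0 : dni x ≤ 1/2 := abs_sub_round x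
  have h2 : |((n - round x : ℤ) : ℝ)| < 1 := by
    have hcalc : ((n - round x : ℤ) : ℝ) = -(x - n) + (x - round x) := by push_cast; ring
    rw [hcalc]
    calc |(-(x - (n:ℝ))) + (x - round x)| ≤ |(-(x - (n:ℝ)))| + |x - round x| := abs_add_le _ _
      _ = |x - (n:ℝ)| + dni x := by rw [abs_neg]; rfl
      _ < 1 := by unfold dni at hcon h0 ⊢; linarith
  have h3 : n = round x := by have := int_abs_lt_one h2; omega
  rw [h3] at hcon
  exact lt_irrefl _ hcon

lemma one_le_wsize {m : ℤ × ℤ} (hm : m ≠ 0) : 1 ≤ wsize m := by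
  have : m.1 ≠ 0 ∨ m.2 ≠ 0 := by
    by_contra hc; push_neg at hc
    exact hm (Prod.ext hc.1 hc.2)
  rcases this with h1 | h2
  · have : (1:ℤ) ≤ |m.1| := Int.one_le_abs h1
    have h4 : (1:ℝ) ≤ |(m.1:ℝ)| := by rw [← Int.cast_abs]; exact_mod_cast this
    exact le_trans h4 (le_max_left _ _)
  · have h3 : (1:ℤ) ≤ |m.2| := Int.one_le_abs h2
    have h4 : (1:ℝ) ≤ |(m.2:ℝ)| := by
      rw [← Int.cast_abs]; exact_mod_cast h3
    have h5 : (1:ℝ) ≤ (m.2:ℝ)^2 := by nlinarith [abs_nonneg ((m.2:ℝ)), sq_abs ((m.2:ℝ))]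
    exact le_trans h5 (le_max_right _ _)

lemma dirichlet (θ₁ θ₂ : ℝ) (T : ℕ) (hT : 1 ≤ T) :
    ∃ m : ℤ × ℤ, m ≠ 0 ∧ wsize m ≤ (T:ℝ)^2 ∧
      dni (θ₁ * m.1 + θ₂ * m.2) < 1/(T:ℝ)^3 := by
  have hT0 : (0:ℝ) < T := by exact_mod_cast hT
  have hT3 : (0:ℝ) < (T:ℝ)^3 := by positivity
  set S : Finset (ℤ×ℤ) := Finset.Icc ((0:ℤ),(0:ℤ)) ((T:ℤ)^2, (T:ℤ)) with hS
  set Tgt : Finset ℤ := Finset.Icc 0 ((T:ℤ)^3 - 1) with hTgt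
  set g : ℤ×ℤ → ℤ := fun p => ⌊(T:ℝ)^3 * Int.fract (θ₁ * p.1 + θ₂ * p.2)⌋ with hg
  have hmaps : ∀ p ∈ S, g p ∈ Tgt := by
    intro p _
    simp only [hTgt, Finset.mem_Icc]
    constructor
    · exact Int.floor_nonneg.2 (mul_nonneg hT3.le (Int.fract_nonneg _))
    · have h1 : (T:ℝ)^3 * Int.fract (θ₁ * p.1 + θ₂ * p.2) < (T:ℝ)^3 := by
        nlinarith [Int.fract_lt_one (θ₁ * p.1 + θ₂ * p.2),
          Int.fract_nonneg (θ₁ * p.1 + θ₂ * p.2)]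
      have h2 : g p < (T:ℤ)^3 := by
        rw [hg]; apply Int.floor_lt.2; push_cast; exact h1
      omega
  have hcard : Tgt.card < S.card := by
    have e1 : Tgt.card = T^3 := by
      rw [hTgt, Int.card_Icc]
      have : ((T:ℤ)^3 - 1 + 1 - 0) = ((T^3 : ℕ) : ℤ) := by push_cast; ring
      rw [this, Int.toNat_natCast]
    have e2 : S.card = (T^2+1) * (T+1) := by
      rw [hS, Finset.Icc_prod_def, Finset.card_product, Int.card_Icc, Int.card_Icc]
      have e3 : ((T:ℤ)^2 + 1 - 0) = ((T^2+1 : ℕ) : ℤ) := by push_cast; ring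
      have e4 : ((T:ℤ) + 1 - 0) = ((T+1 : ℕ) : ℤ) := by push_cast; ring
      rw [e3, e4, Int.toNat_natCast, Int.toNat_natCast]
    rw [e1, e2]
    nlinarith [hT]
  obtain ⟨p, hpS, p', hp'S, hne, heq⟩ :=
    Finset.exists_ne_map_eq_of_card_lt_of_maps_to hcard hmaps
  rw [hS, Finset.mem_Icc, Prod.le_def, Prod.le_def] at hpS hp'S
  obtain ⟨⟨hp1l, hp2l⟩, ⟨hp1r, hp2r⟩⟩ := hpS
  obtain ⟨⟨hp1l', hp2l'⟩, ⟨hp1r', hp2r'⟩⟩ := hp'S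
  set u := θ₁ * p.1 + θ₂ * p.2 with hu
  set u' := θ₁ * p'.1 + θ₂ * p'.2 with hu'
  refine ⟨p - p', sub_ne_zero.2 hne, ?_, ?_⟩
  · -- wsize bound
    have c1 : |((p - p').1 : ℝ)| ≤ (T:ℝ)^2 := by
      have : (p - p').1 = p.1 - p'.1 := rfl
      rw [this]
      have b1 : (0:ℝ) ≤ (p.1:ℝ) := by exact_mod_cast hp1l
      have b2 : (p.1:ℝ) ≤ (T:ℝ)^2 := by exact_mod_cast hp1r
      have b3 : (0:ℝ) ≤ (p'.1:ℝ) := by exact_mod_cast hp1l'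
      have b4 : (p'.1:ℝ) ≤ (T:ℝ)^2 := by exact_mod_cast hp1r'
      rw [abs_le]; push_cast; constructor <;> linarith
    have c2 : (((p - p').2 : ℤ):ℝ)^2 ≤ (T:ℝ)^2 := by
      have : (p - p').2 = p.2 - p'.2 := rfl
      rw [this]
      have b1 : (0:ℝ) ≤ (p.2:ℝ) := by exact_mod_cast hp2l
      have b2 : (p.2:ℝ) ≤ (T:ℝ) := by exact_mod_cast hp2r
      have b3 : (0:ℝ) ≤ (p'.2:ℝ) := by exact_mod_cast hp2l'
      have b4 : (p'.2:ℝ) ≤ (T:ℝ) := by exact_mod_cast hp2r'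
      push_cast
      nlinarith
    exact max_le c1 c2
  · -- dni bound
    have hfl : |(T:ℝ)^3 * Int.fract u - (T:ℝ)^3 * Int.fract u'| < 1 := by
      have e : g p = g p' := heq
      rw [hg] at e
      simp only at e
      have f1 := Int.lt_floor_add_one ((T:ℝ)^3 * Int.fract u)
      have f2 := Int.floor_le ((T:ℝ)^3 * Int.fract u')
      have f3 := Int.lt_floor_add_one ((T:ℝ)^3 * Int.fract u')
      have f4 := Int.floor_le ((T:ℝ)^3 * Int.fract u)
      rw [abs_sub_lt_iff]
      rw [hu, hu'] at *
      constructor <;> [skip; skip] <;>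
      · rw [e] at * <;> push_cast at * <;> linarith
    have hfr : |Int.fract u - Int.fract u'| < 1/(T:ℝ)^3 := by
      rw [← mul_sub, abs_mul, abs_of_pos hT3] at hfl
      rw [lt_div_iff₀ hT3, mul_comm]
      exact hfl
    have harg : θ₁ * (((p - p').1 : ℤ):ℝ) + θ₂ * (((p - p').2 : ℤ):ℝ) = u - u' := by
      have e1 : (p - p').1 = p.1 - p'.1 := rfl
      have e2 : (p - p').2 = p.2 - p'.2 := rfl
      rw [e1, e2, hu, hu']; push_cast; ring
    rw [harg]
    calc dni (u - u') ≤ |(u - u') - ((⌊u⌋ - ⌊u'⌋ : ℤ):ℝ)| := dni_le_abs_sub _ _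
      _ = |Int.fract u - Int.fract u'| := by
          congr 1
          rw [Int.fract, Int.fract]; push_cast; ring
      _ < 1/(T:ℝ)^3 := hfr

lemma exists_min (θ₁ θ₂ : ℝ) (W : ℝ) (p : ℤ × ℤ) (hp0 : p ≠ 0) (hpW : wsize p ≤ W) :
    ∃ m : ℤ × ℤ, m ≠ 0 ∧ wsize m ≤ W ∧ ∀ x : ℤ × ℤ, x ≠ 0 → wsize x ≤ W →
      dni (θ₁ * m.1 + θ₂ * m.2) ≤ dni (θ₁ * x.1 + θ₂ * x.2) := by
  classical
  set N : ℤ := ⌈W⌉ with hN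
  have key : ∀ x : ℤ × ℤ, x ≠ 0 → wsize x ≤ W → x ∈
      (Finset.Icc ((-N, -N) : ℤ × ℤ) (N, N)).filter (fun y => y ≠ 0 ∧ wsize y ≤ W) := by
    intro x hx0 hxW
    rw [Finset.mem_filter, Finset.mem_Icc, Prod.le_def, Prod.le_def]
    refine ⟨⟨⟨?_, ?_⟩, ?_, ?_⟩, hx0, hxW⟩ <;>
    · have h1 : |(x.1:ℝ)| ≤ W := le_trans (le_max_left _ _) hxW
      have h2 : (x.2:ℝ)^2 ≤ W := le_trans (le_max_right _ _) hxW
      have h3 : |(x.2:ℝ)| ≤ W := by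
        have : |(x.2:ℝ)| ≤ (x.2:ℝ)^2 := by
          rcases eq_or_ne x.2 0 with h | h
          · simp [h]
          · have : (1:ℝ) ≤ |(x.2:ℝ)| := by
              rw [← Int.cast_abs]; exact_mod_cast Int.one_le_abs h
            nlinarith [sq_abs ((x.2:ℝ))]
        linarith
      have hWN : W ≤ (N:ℝ) := Int.le_ceil W
      have b1 : |x.1| ≤ N := by
        have : |(x.1:ℝ)| ≤ (N:ℝ) := le_trans h1 hWN
        rw [← Int.cast_abs] at this; exact_mod_cast this
      have b2 : |x.2| ≤ N := by
        have : |(x.2:ℝ)| ≤ (N:ℝ) := le_trans h3 hWN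
        rw [← Int.cast_abs] at this; exact_mod_cast this
      rw [abs_le] at b1 b2
      omega
  have hne : ((Finset.Icc ((-N, -N) : ℤ × ℤ) (N, N)).filter
      (fun y => y ≠ 0 ∧ wsize y ≤ W)).Nonempty := ⟨p, key p hp0 hpW⟩
  obtain ⟨m, hmB, hmin⟩ := Finset.exists_min_image _
    (fun y : ℤ × ℤ => dni (θ₁ * y.1 + θ₂ * y.2)) hne
  rw [Finset.mem_filter] at hmB
  exact ⟨m, hmB.2.1, hmB.2.2, fun x hx0 hxW => hmin x (key x hx0 hxW)⟩

lemma min_isBA (θ₁ θ₂ : ℝ) (h : LinIndep θ₁ θ₂) (m : ℤ × ℤ) (hm0 : m ≠ 0)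
    (hmin : ∀ x : ℤ × ℤ, x ≠ 0 → wsize x ≤ wsize m →
      dni (θ₁ * m.1 + θ₂ * m.2) ≤ dni (θ₁ * x.1 + θ₂ * x.2))
    (hhalf : dni (θ₁ * m.1 + θ₂ * m.2) < 1/2) :
    IsBestApprox θ₁ θ₂ m := by
  set w : ℝ := θ₁ * m.1 + θ₂ * m.2 with hw
  have hzw : zeta θ₁ θ₂ m = |w - round w| := rfl
  have hh : |w - ((round w : ℤ):ℝ)| < 1/2 := hhalf
  refine ⟨hm0, -round w, ?_, ?_⟩
  · have e : ((-round w : ℤ) : ℝ) + θ₁ * m.1 + θ₂ * m.2 = w - round w := by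
      push_cast; rw [hw]; ring
    rw [e, hzw]
  · intro x₀ x₁ x₂ hxw hxz
    set u : ℝ := θ₁ * x₁ + θ₂ * x₂ with hu
    have habs0 : |(x₀:ℝ) + θ₁ * x₁ + θ₂ * x₂| = |u - ((-x₀ : ℤ):ℝ)| := by
      congr 1; push_cast; rw [hu]; ring
    by_cases hx0 : x₁ = 0 ∧ x₂ = 0
    · left
      obtain ⟨e1, e2⟩ := hx0
      have : |(x₀:ℝ)| ≤ zeta θ₁ θ₂ m := by
        have := hxz; rw [e1, e2] at this; push_cast at this; simpa using this
      have hlt : |(x₀:ℝ)| < 1 := by rw [hzw] at this; linarith [hh]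
      have : x₀ = 0 := int_abs_lt_one hlt
      simp [this, e1, e2]
    · have hxne : ((x₁, x₂) : ℤ × ℤ) ≠ 0 := by
        simp only [Prod.ext_iff, Prod.fst_zero, Prod.snd_zero, ne_eq]
        tauto
      have hdu : dni u ≤ zeta θ₁ θ₂ m := by
        calc dni u ≤ |u - ((-x₀ : ℤ):ℝ)| := dni_le_abs_sub _ _
          _ = |(x₀:ℝ) + θ₁ * x₁ + θ₂ * x₂| := habs0.symm
          _ ≤ zeta θ₁ θ₂ m := hxz
      have hge : zeta θ₁ θ₂ m ≤ dni u := by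
        have := hmin (x₁, x₂) hxne (by exact hxw)
        exact this
      have heq : dni u = dni w := le_antisymm hdu hge
      have habs : |u - round u| = |w - round w| := heq
      have hzd : zeta θ₁ θ₂ m = dni w := rfl
      rcases abs_eq_abs.1 habs with hcase | hcase
      · -- x = m
        have hz : ((round w - round u : ℤ) : ℝ) + ((x₁ - m.1 : ℤ) : ℝ) * θ₁
            + ((x₂ - m.2 : ℤ) : ℝ) * θ₂ = 0 := by
          push_cast
          rw [hu, hw] at hcase
          push_cast at hcase
          linarith [hcase]
        obtain ⟨ha, hb, hc⟩ := h _ _ _ hz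
        have e1 : x₁ = m.1 := by omega
        have e2 : x₂ = m.2 := by omega
        have euw : u = w := by rw [hu, hw, e1, e2]
        have hx₀ : x₀ = -round w := by
          have h1 : |u - ((-x₀ : ℤ):ℝ)| ≤ |w - round w| := by
            rw [← habs0, ← hzw]; exact hxz
          rw [euw] at h1
          have h2 : |((x₀ + round w : ℤ):ℝ)| < 1 := by
            have e : ((x₀ + round w : ℤ):ℝ) = (w - ((-x₀:ℤ):ℝ)) - (w - round w) := by
              push_cast; ring
            rw [e]
            calc |(w - ((-x₀:ℤ):ℝ)) - (w - round w)| ≤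
                |w - ((-x₀:ℤ):ℝ)| + |w - round w| := abs_sub _ _
              _ < 1 := by linarith [hh]
          have := int_abs_lt_one h2; omega
        right; left
        simp [hx₀, e1, e2]
      · -- x = -m
        have hz : ((-(round u) - round w : ℤ) : ℝ) + ((x₁ + m.1 : ℤ) : ℝ) * θ₁
            + ((x₂ + m.2 : ℤ) : ℝ) * θ₂ = 0 := by
          push_cast
          rw [hu, hw] at hcase
          push_cast at hcase
          linarith [hcase]
        obtain ⟨ha, hb, hc⟩ := h _ _ _ hz
        have e1 : x₁ = -m.1 := by omega
        have e2 : x₂ = -m.2 := by omega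
        have euw : u = -w := by rw [hu, hw, e1, e2]; push_cast; ring
        have hx₀ : x₀ = round w := by
          have h1 : |u - ((-x₀ : ℤ):ℝ)| ≤ |w - round w| := by
            rw [← habs0, ← hzw]; exact hxz
          rw [euw] at h1
          have h2 : |((x₀ - round w : ℤ):ℝ)| < 1 := by
            have e : ((x₀ - round w : ℤ):ℝ) = (-w - ((-x₀:ℤ):ℝ)) + (w - round w) := by
              push_cast; ring
            rw [e]
            calc |(-w - ((-x₀:ℤ):ℝ)) + (w - round w)| ≤
                |(-w - ((-x₀:ℤ):ℝ))| + |w - round w| := abs_add_le _ _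
              _ < 1 := by linarith [hh]
          have := int_abs_lt_one h2; omega
        right; right
        simp [hx₀, e1, e2]

set_option maxHeartbeats 1000000 in
/-- if the linear form at all best approximation vectors is
bounded away from zero, then `(η₁,η₂) ∈ BAD^Θ(2/3,1/3)`. -/
theorem stmt_1 (θ₁ θ₂ : ℝ) (h : LinIndep θ₁ θ₂) (η₁ η₂ : ℝ)
    (hinf : ∃ γ > (0 : ℝ), ∀ m : ℤ × ℤ, IsBestApprox θ₁ θ₂ m →
      γ ≤ dni (η₁ * m.1 + η₂ * m.2)) :
    BADT θ₁ θ₂ η₁ η₂ := by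
  classical
  obtain ⟨γ, hγpos, hlow⟩ := hinf
  set γ0 : ℝ := min γ (1/4) with hγ0def
  have hγ0pos : 0 < γ0 := lt_min hγpos (by norm_num)
  have hγ0le : γ0 ≤ 1/4 := min_le_right _ _
  have hγ0γ : γ0 ≤ γ := min_le_left _ _
  set K : ℝ := (2/γ0) ^ ((1:ℝ)/3) + 1 with hKdef
  have hKpos : 0 < K := by
    rw [hKdef]
    have : (0:ℝ) ≤ (2/γ0) ^ ((1:ℝ)/3) := Real.rpow_nonneg (by positivity) _
    linarith
  set c : ℝ := γ0 / (2 * (K^2 + K)) with hcdef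
  have hK2pos : 0 < K^2 + K := add_pos (pow_pos hKpos 2) hKpos
  have hcpos : 0 < c := by
    apply div_pos hγ0pos; linarith
  refine ⟨c, hcpos, ?_⟩
  intro q hq
  by_contra hcon
  push_neg at hcon
  have hq0 : (0:ℝ) < q := by exact_mod_cast hq
  have hq1 : (1:ℝ) ≤ q := by exact_mod_cast hq
  have hq23 : (0:ℝ) < (q:ℝ) ^ ((2:ℝ)/3) := Real.rpow_pos_of_pos hq0 _
  have hq13 : (0:ℝ) < (q:ℝ) ^ ((1:ℝ)/3) := Real.rpow_pos_of_pos hq0 _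
  set α : ℝ := dni ((q:ℝ) * θ₁ - η₁) with hαdef
  set β : ℝ := dni ((q:ℝ) * θ₂ - η₂) with hβdef
  have hα : α < c / (q:ℝ) ^ ((2:ℝ)/3) := by
    rw [lt_div_iff₀ hq23, mul_comm]
    exact lt_of_le_of_lt (le_max_left _ _) hcon
  have hβ : β < c / (q:ℝ) ^ ((1:ℝ)/3) := by
    rw [lt_div_iff₀ hq13, mul_comm]
    exact lt_of_le_of_lt (le_max_right _ _) hcon
  set δ : ℝ := γ0 / (2 * q) with hδdef
  have hδpos : 0 < δ := by positivity
  set P : ℕ → Prop := fun n => ∃ p : ℤ × ℤ, p ≠ 0 ∧ wsize p ≤ (n:ℝ)^2 ∧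
    dni (θ₁ * p.1 + θ₂ * p.2) ≤ δ with hPdef
  have hPex : ∃ n, P n := by
    set T₁ : ℕ := max 1 ⌈2 * (q:ℝ) / γ0⌉₊ with hT₁def
    have hT₁1 : 1 ≤ T₁ := le_max_left _ _
    have hT₁R : 2 * (q:ℝ) / γ0 ≤ (T₁:ℝ) := by
      calc 2 * (q:ℝ) / γ0 ≤ (⌈2 * (q:ℝ) / γ0⌉₊ : ℝ) := Nat.le_ceil _
        _ ≤ (T₁:ℝ) := by
            have hh : ⌈2 * (q:ℝ) / γ0⌉₊ ≤ T₁ := le_max_right _ _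
            exact_mod_cast hh
    obtain ⟨p, hp0, hpW, hpζ⟩ := dirichlet θ₁ θ₂ T₁ hT₁1
    refine ⟨T₁, p, hp0, hpW, le_of_lt (lt_of_lt_of_le hpζ ?_)⟩
    have hT₁r : (1:ℝ) ≤ (T₁:ℝ) := by exact_mod_cast hT₁1
    have hT₁R' : 2 * (q:ℝ) ≤ (T₁:ℝ) * γ0 := by
      rw [div_le_iff₀ hγ0pos] at hT₁R; exact hT₁R
    have hcube : (T₁:ℝ) ≤ (T₁:ℝ)^3 := by
      have h0 : 0 ≤ (T₁:ℝ) * ((T₁:ℝ) - 1) * ((T₁:ℝ) + 1) :=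
        mul_nonneg (mul_nonneg (by linarith) (by linarith)) (by linarith)
      linarith [h0]
    rw [hδdef, div_le_div_iff₀ (by positivity) (by positivity)]
    have hstep : (T₁:ℝ) * γ0 ≤ (T₁:ℝ)^3 * γ0 := mul_le_mul_of_nonneg_right hcube hγ0pos.le
    linarith [hT₁R', hstep]
  set T : ℕ := Nat.find hPex with hTdef
  have hPT : P T := Nat.find_spec hPex
  have hT1 : 1 ≤ T := by
    rcases Nat.eq_zero_or_pos T with h0 | h1
    · exfalso
      obtain ⟨p, hp0, hpW, _⟩ := hPT
      rw [h0] at hpW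
      have := one_le_wsize hp0
      norm_num at hpW
      linarith
    · exact h1
  have hTr1 : (1:ℝ) ≤ (T:ℝ) := by exact_mod_cast hT1
  obtain ⟨p, hp0, hpW, hpζ⟩ := hPT
  obtain ⟨m, hm0, hmW, hmin⟩ := exists_min θ₁ θ₂ ((T:ℝ)^2) p hp0 hpW
  set ζ : ℝ := dni (θ₁ * m.1 + θ₂ * m.2) with hζdef
  have hζδ : ζ ≤ δ := le_trans (hmin p hp0 hpW) hpζ
  have hζhalf : ζ < 1/2 := by
    have h1 : δ ≤ γ0 / 2 := by
      rw [hδdef]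
      apply div_le_div_of_nonneg_left hγ0pos.le (by norm_num)
      linarith
    linarith
  have hBA : IsBestApprox θ₁ θ₂ m :=
    min_isBA θ₁ θ₂ h m hm0 (fun x hx0 hxW => hmin x hx0 (le_trans hxW hmW)) hζhalf
  have hγm : γ0 ≤ dni (η₁ * m.1 + η₂ * m.2) := le_trans hγ0γ (hlow m hBA)
  -- transference inequality
  set u : ℝ := (q:ℝ) * θ₁ - η₁ with hudef
  set v : ℝ := (q:ℝ) * θ₂ - η₂ with hvdef
  set w : ℝ := θ₁ * m.1 + θ₂ * m.2 with hwdef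
  have key : dni (η₁ * m.1 + η₂ * m.2) ≤
      |(m.1:ℝ)| * α + |(m.2:ℝ)| * β + (q:ℝ) * ζ := by
    have h1 : dni (η₁ * m.1 + η₂ * m.2) ≤
        |η₁ * m.1 + η₂ * m.2 - ((-m.1 * round u - m.2 * round v + q * round w : ℤ):ℝ)| :=
      dni_le_abs_sub _ _
    have h2 : η₁ * (m.1:ℝ) + η₂ * m.2 - ((-m.1 * round u - m.2 * round v + q * round w : ℤ):ℝ)
        = (-(m.1:ℝ)) * (u - round u) + (-(m.2:ℝ)) * (v - round v) + (q:ℝ) * (w - round w) := by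
      rw [hudef, hvdef, hwdef]; push_cast; ring
    rw [h2] at h1
    calc dni (η₁ * m.1 + η₂ * m.2) ≤
        |(-(m.1:ℝ)) * (u - round u) + (-(m.2:ℝ)) * (v - round v) + (q:ℝ) * (w - round w)| := h1
      _ ≤ |(-(m.1:ℝ)) * (u - round u) + (-(m.2:ℝ)) * (v - round v)| + |(q:ℝ) * (w - round w)| :=
          abs_add_le _ _
      _ ≤ |(-(m.1:ℝ)) * (u - round u)| + |(-(m.2:ℝ)) * (v - round v)| + |(q:ℝ) * (w - round w)| :=
          by linarith [abs_add_le ((-(m.1:ℝ)) * (u - round u)) ((-(m.2:ℝ)) * (v - round v))]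
      _ = |(m.1:ℝ)| * α + |(m.2:ℝ)| * β + (q:ℝ) * ζ := by
          rw [abs_mul, abs_mul, abs_mul, abs_neg, abs_neg, abs_of_pos hq0]
          rfl
  -- coordinate bounds
  have hm1 : |(m.1:ℝ)| ≤ (T:ℝ)^2 := le_trans (le_max_left _ _) hmW
  have hm2sq : ((m.2:ℝ))^2 ≤ ((T:ℝ))^2 := le_trans (le_max_right _ _) hmW
  have hm2 : |(m.2:ℝ)| ≤ (T:ℝ) := by
    have hs := Real.sqrt_le_sqrt hm2sq
    rwa [Real.sqrt_sq_eq_abs, Real.sqrt_sq (by linarith : (0:ℝ) ≤ (T:ℝ))] at hs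
  have hqζ : (q:ℝ) * ζ ≤ γ0 / 2 := by
    have : (q:ℝ) * ζ ≤ (q:ℝ) * δ := mul_le_mul_of_nonneg_left hζδ hq0.le
    have hδq : (q:ℝ) * δ = γ0 / 2 := by
      have hqne : (q:ℝ) ≠ 0 := ne_of_gt hq0
      rw [hδdef]; field_simp
    linarith
  have hmain : γ0 / 2 ≤ (T:ℝ)^2 * α + (T:ℝ) * β := by
    have e1 : |(m.1:ℝ)| * α ≤ (T:ℝ)^2 * α := mul_le_mul_of_nonneg_right hm1 (dni_nonneg _)
    have e2 : |(m.2:ℝ)| * β ≤ (T:ℝ) * β := mul_le_mul_of_nonneg_right hm2 (dni_nonneg _)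
    linarith [key, hγm, hqζ]
  -- bound on T
  set R : ℝ := (2 * (q:ℝ) / γ0) ^ ((1:ℝ)/3) with hRdef
  have hRpos : 0 < R := Real.rpow_pos_of_pos (by positivity) _
  have hR3 : R ^ (3:ℕ) = 2 * (q:ℝ) / γ0 := by
    rw [hRdef, ← Real.rpow_natCast ((2 * (q:ℝ) / γ0) ^ ((1:ℝ)/3)) 3,
      ← Real.rpow_mul (by positivity)]
    norm_num
  have hTR : (T:ℝ) ≤ R + 1 := by
    rcases Nat.lt_or_ge T 2 with h2 | h2
    · have : T = 1 := by omega
      rw [this]; push_cast; linarith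
    · have hfm : ¬ P (T - 1) := Nat.find_min hPex (by omega)
      obtain ⟨p', hp'0, hp'W, hp'ζ⟩ := dirichlet θ₁ θ₂ (T-1) (by omega)
      have hδlt : δ < dni (θ₁ * p'.1 + θ₂ * p'.2) := by
        by_contra hle
        push_neg at hle
        exact hfm ⟨p', hp'0, hp'W, hle⟩
      have h3 : ((T-1 : ℕ):ℝ)^3 < 2 * (q:ℝ) / γ0 := by
        have hs1 : (1:ℝ) ≤ ((T-1:ℕ):ℝ) := by
          have : 1 ≤ T - 1 := by omega
          exact_mod_cast this
        have hlt : δ < 1/((T-1:ℕ):ℝ)^3 := lt_trans hδlt hp'ζ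
        rw [hδdef, div_lt_div_iff₀ (by positivity) (by positivity)] at hlt
        rw [lt_div_iff₀ hγ0pos]
        linarith [hlt]
      have hsR : ((T-1:ℕ):ℝ) < R := by
        by_contra hge
        push_neg at hge
        have : R ^ (3:ℕ) ≤ ((T-1:ℕ):ℝ) ^ (3:ℕ) := pow_le_pow_left₀ hRpos.le hge 3
        rw [hR3] at this
        push_cast at this h3
        linarith
      have : (T:ℝ) = ((T-1:ℕ):ℝ) + 1 := by
        have : T = (T-1) + 1 := by omega
        rw [this]; push_cast; ring
      linarith
  -- combine
  set Q : ℝ := (q:ℝ) ^ ((1:ℝ)/3) with hQdef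
  have hQ1 : (1:ℝ) ≤ Q := by
    rw [hQdef]
    calc (1:ℝ) = (1:ℝ) ^ ((1:ℝ)/3) := (Real.one_rpow _).symm
      _ ≤ (q:ℝ) ^ ((1:ℝ)/3) := Real.rpow_le_rpow (by norm_num) hq1 (by norm_num)
  have hsplit : R = (2/γ0) ^ ((1:ℝ)/3) * Q := by
    rw [hRdef, hQdef, show 2 * (q:ℝ) / γ0 = (2/γ0) * (q:ℝ) by ring,
      Real.mul_rpow (by positivity) hq0.le]
  have hRK : R + 1 ≤ K * Q := by
    rw [hsplit, hKdef]
    have h0 : (0:ℝ) ≤ (2/γ0) ^ ((1:ℝ)/3) := Real.rpow_nonneg (by positivity) _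
    linarith [hQ1]
  have hTKQ : (T:ℝ) ≤ K * Q := le_trans hTR hRK
  have hQ2 : Q^2 = (q:ℝ) ^ ((2:ℝ)/3) := by
    rw [hQdef, ← Real.rpow_natCast ((q:ℝ) ^ ((1:ℝ)/3)) 2, ← Real.rpow_mul hq0.le]
    norm_num
  have hT2 : (T:ℝ)^2 ≤ K^2 * (q:ℝ) ^ ((2:ℝ)/3) := by
    rw [← hQ2]
    have hsq := mul_self_le_mul_self (by linarith : (0:ℝ) ≤ (T:ℝ)) hTKQ
    linarith [hsq]
  have hTQ13 : (T:ℝ) ≤ K * (q:ℝ) ^ ((1:ℝ)/3) := hTKQ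
  have e1 : (T:ℝ)^2 * α < K^2 * c := by
    calc (T:ℝ)^2 * α ≤ (K^2 * (q:ℝ) ^ ((2:ℝ)/3)) * α :=
          mul_le_mul_of_nonneg_right hT2 (dni_nonneg _)
      _ < (K^2 * (q:ℝ) ^ ((2:ℝ)/3)) * (c / (q:ℝ) ^ ((2:ℝ)/3)) := by
          apply mul_lt_mul_of_pos_left hα
          positivity
      _ = K^2 * c := by field_simp
  have e2 : (T:ℝ) * β < K * c := by
    calc (T:ℝ) * β ≤ (K * (q:ℝ) ^ ((1:ℝ)/3)) * β :=
          mul_le_mul_of_nonneg_right hTQ13 (dni_nonneg _)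
      _ < (K * (q:ℝ) ^ ((1:ℝ)/3)) * (c / (q:ℝ) ^ ((1:ℝ)/3)) := by
          apply mul_lt_mul_of_pos_left hβ
          positivity
      _ = K * c := by field_simp
  have hfin : (K^2 + K) * c = γ0 / 2 := by
    rw [hcdef]
    have hne : K^2 + K ≠ 0 := hK2pos.ne'
    field_simp
  clear_value γ0 K c α β δ T ζ u v w R Q
  have hs1 : γ0/2 < K^2*c + K*c := by linarith [hmain, e1, e2]
  have hs2 : K^2*c + K*c = γ0/2 := by linarith [hfin]
  linarith [hs1, hs2]
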